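/- Let T ≥ 2 and let G_T : ℝ^T → ℝ be as in the lower-bound construction. For x ∈ ℝ^T, let prog_{9/10}(x) := max{i ∈ {0,…,T} : |x_i| > 9/10} with the convention x₀ := 1. If prog_{9/10}(x) < T − 1, then the smallest eigenvalue of the Hessian of G_T at x satisfies λ_min(∇²G_T(x)) ≤ −1/2. -/

import Mathlib

open scoped RealInnerProductSpace

/-- The bump-like component function `Ψ` of the hard-instance construction. -/
noncomputable def Psi (x : ℝ) : ℝ :=
  if 1 / 2 < x then Real.exp (1 - 1 / (2 * x - 1) ^ 2) else 0

/-- The component function `Λ` of the hard-instance construction. -/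
noncomputable def Lam (x : ℝ) : ℝ := 8 * (Real.exp (-x ^ 2 / 2) - 1)

/-- The hard instance `G_T(x) = Ψ(1)Λ(x₁) + ∑_{i=2}^T [Ψ(-x_{i-1})Λ(-x_i) + Ψ(x_{i-1})Λ(x_i)]`
(coordinates are `0`-indexed in Lean: mathematical `x_i` is Lean's `x ⟨i-1, _⟩`). -/
noncomputable def G (T : ℕ) (x : EuclideanSpace ℝ (Fin T)) : ℝ :=
  ∑ i : Fin T,
    if (i : ℕ) = 0 then Psi 1 * Lam (x i)
    else
      Psi (-(x ⟨(i : ℕ) - 1, Nat.lt_of_le_of_lt (Nat.sub_le _ _) i.isLt⟩)) * Lam (-(x i)) +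
        Psi (x ⟨(i : ℕ) - 1, Nat.lt_of_le_of_lt (Nat.sub_le _ _) i.isLt⟩) * Lam (x i)

/-- `prog_α(x) = max{i ∈ {0,…,T} : |x_i| > α}` with the convention `x₀ := 1`
(mathematical index `i` corresponds to the Lean coordinate `j : Fin T` with `j + 1 = i`). -/
noncomputable def prog {T : ℕ} (α : ℝ) (x : EuclideanSpace ℝ (Fin T)) : ℕ :=
  sSup {i : ℕ | i = 0 ∨ ∃ j : Fin T, (j : ℕ) + 1 = i ∧ α < |x j|}

/-- The smallest eigenvalue of a (self-adjoint) operator on `ℝ^T`, as the infimum of the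
Rayleigh quotient over the unit sphere. -/
noncomputable def lambdaMin {T : ℕ}
    (A : EuclideanSpace ℝ (Fin T) →L[ℝ] EuclideanSpace ℝ (Fin T)) : ℝ :=
  ⨅ u : {v : EuclideanSpace ℝ (Fin T) // ‖v‖ = 1}, ⟪u.1, A u.1⟫

noncomputable def dPsi (x : ℝ) : ℝ :=
  if 1 / 2 < x then 4 / (2 * x - 1) ^ 3 * Real.exp (1 - 1 / (2 * x - 1) ^ 2) else 0

noncomputable def ddPsi (x : ℝ) : ℝ :=
  if 1 / 2 < x then (16 / (2 * x - 1) ^ 6 - 24 / (2 * x - 1) ^ 4) * Real.exp (1 - 1 / (2 * x - 1) ^ 2) else 0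

noncomputable def dLam (x : ℝ) : ℝ := -8 * x * Real.exp (-x ^ 2 / 2)

noncomputable def ddLam (x : ℝ) : ℝ := 8 * (x ^ 2 - 1) * Real.exp (-x ^ 2 / 2)

open Filter Topology Real

lemma key_tendsto (n : ℕ) :
    Tendsto (fun t : ℝ => t ^ n * Real.exp (-t ^ 2)) atTop (𝓝 0) := by
  have h := tendsto_pow_mul_exp_neg_atTop_nhds_zero n
  refine tendsto_of_tendsto_of_tendsto_of_le_of_le' tendsto_const_nhds h ?_ ?_
  · filter_upwards [eventually_ge_atTop (0:ℝ)] with t ht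
    positivity
  · filter_upwards [eventually_ge_atTop (1:ℝ)] with t ht
    have h1 : t ≤ t ^ 2 := by nlinarith
    have := Real.exp_le_exp.2 (neg_le_neg h1)
    have ht0 : (0:ℝ) ≤ t ^ n := by positivity
    calc t ^ n * Real.exp (-t ^ 2) ≤ t ^ n * Real.exp (-t) := by
          exact mul_le_mul_of_nonneg_left this ht0
      _ = t ^ n * Real.exp (-t) := rfl

lemma tendsto_2y1 : Tendsto (fun y : ℝ => 2 * y - 1) (𝓝[>] (1/2 : ℝ)) (𝓝[>] (0:ℝ)) := by
  have h1 : Tendsto (fun y : ℝ => 2 * y - 1) (𝓝 (1/2 : ℝ)) (𝓝 (0:ℝ)) := by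
    have : Tendsto (fun y : ℝ => 2 * y - 1) (𝓝 (1/2 : ℝ)) (𝓝 (2 * (1/2) - 1)) := by
      exact (tendsto_id.const_mul 2).sub_const 1
    simpa using this
  rw [tendsto_nhdsWithin_iff]
  constructor
  · exact h1.mono_left nhdsWithin_le_nhds
  · filter_upwards [self_mem_nhdsWithin] with y (hy : 1/2 < y)
    simp only [Set.mem_Ioi]; linarith

lemma master (c : ℝ) (n : ℕ) :
    Tendsto (fun y : ℝ => c / (2 * y - 1) ^ n * Real.exp (1 - 1 / (2 * y - 1) ^ 2))
      (𝓝[>] (1/2 : ℝ)) (𝓝 0) := by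
  have h0 : Tendsto (fun t : ℝ => (c * Real.exp 1) * (t ^ n * Real.exp (-t ^ 2))) atTop (𝓝 0) := by
    simpa using (key_tendsto n).const_mul (c * Real.exp 1)
  have h1 : Tendsto (fun u : ℝ => u⁻¹) (𝓝[>] (0:ℝ)) atTop := tendsto_inv_nhdsGT_zero
  have h2 := (h0.comp h1).comp tendsto_2y1
  refine h2.congr' ?_
  filter_upwards [self_mem_nhdsWithin] with y (hy : 1/2 < y)
  have hu : (2 * y - 1) ≠ 0 := by intro h; rw [sub_eq_zero] at h; linarith [h]
  simp only [Function.comp]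
  rw [show (1 - 1 / (2 * y - 1) ^ 2) = 1 + -(2 * y - 1)⁻¹ ^ 2 by
    rw [one_div, ← inv_pow]; ring]
  rw [Real.exp_add, div_eq_mul_inv, ← inv_pow]
  ring

lemma psi_flat_zero (f : ℝ → ℝ) (hf : ∀ y ≤ (1:ℝ)/2, f y = 0)
    (c : ℝ) (n : ℕ)
    (hf' : ∀ y, 1/2 < y → f y = c / (2 * y - 1) ^ n * Real.exp (1 - 1 / (2 * y - 1) ^ 2)) :
    HasDerivAt f 0 (1/2) := by
  rw [hasDerivAt_iff_tendsto_slope]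
  rw [← nhdsLT_sup_nhdsGT, tendsto_sup]
  have hf0 : f (1/2) = 0 := hf _ le_rfl
  constructor
  · refine Tendsto.congr' ?_ tendsto_const_nhds
    filter_upwards [self_mem_nhdsWithin] with y (hy : y < 1/2)
    rw [slope_def_field, hf y hy.le, hf0]
    simp
  · have h := master (2 * c) (n + 1)
    refine Tendsto.congr' ?_ h
    filter_upwards [self_mem_nhdsWithin] with y (hy : 1/2 < y)
    have hu : (2 * y - 1) ≠ 0 := by intro h; rw [sub_eq_zero] at h; linarith
    rw [slope_def_field, hf' y hy, hf0, sub_zero]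
    generalize Real.exp (1 - 1 / (2 * y - 1) ^ 2) = E
    rw [show y - 1/2 = (2 * y - 1)/2 by ring]
    rw [pow_succ]
    field_simp

lemma hasDerivAt_psi (x : ℝ) : HasDerivAt Psi (dPsi x) x := by
  rcases lt_trichotomy x (1/2) with h | h | h
  · have he : Psi =ᶠ[𝓝 x] fun _ => (0:ℝ) := by
      filter_upwards [Iio_mem_nhds h] with y (hy : y < 1/2)
      unfold Psi; rw [if_neg (not_lt.2 hy.le)]
    have h0 : dPsi x = 0 := by unfold dPsi; rw [if_neg (not_lt.2 h.le)]
    rw [h0]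
    exact (hasDerivAt_const x (0:ℝ)).congr_of_eventuallyEq he
  · subst h
    have h0 : dPsi (1/2) = 0 := by unfold dPsi; rw [if_neg (lt_irrefl _)]
    rw [h0]
    refine psi_flat_zero Psi (fun y hy => by unfold Psi; rw [if_neg (not_lt.2 hy)]) 1 0 ?_
    intro y hy
    unfold Psi; rw [if_pos hy]
    simp
  · have hu : (2 * x - 1) ≠ 0 := by intro hc; rw [sub_eq_zero] at hc; linarith
    have hu2 : (2 * x - 1) ^ 2 ≠ 0 := pow_ne_zero _ hu
    have h1 : HasDerivAt (fun y : ℝ => 2 * y - 1) 2 x := by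
      simpa using ((hasDerivAt_id x).const_mul 2).sub_const 1
    have h5 := (((h1.fun_pow 2).fun_inv hu2).const_sub 1).exp
    have he : Psi =ᶠ[𝓝 x] fun y => Real.exp (1 - ((2 * y - 1) ^ 2)⁻¹) := by
      filter_upwards [Ioi_mem_nhds h] with y (hy : 1/2 < y)
      unfold Psi; rw [if_pos hy, one_div]
    have h6 := h5.congr_of_eventuallyEq he
    refine h6.congr_deriv (Eq.symm ?_)
    unfold dPsi; rw [if_pos h, one_div]
    field_simp
    ring

lemma hasDerivAt_dPsi (x : ℝ) : HasDerivAt dPsi (ddPsi x) x := by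
  rcases lt_trichotomy x (1/2) with h | h | h
  · have he : dPsi =ᶠ[𝓝 x] fun _ => (0:ℝ) := by
      filter_upwards [Iio_mem_nhds h] with y (hy : y < 1/2)
      unfold dPsi; rw [if_neg (not_lt.2 hy.le)]
    have h0 : ddPsi x = 0 := by unfold ddPsi; rw [if_neg (not_lt.2 h.le)]
    rw [h0]
    exact (hasDerivAt_const x (0:ℝ)).congr_of_eventuallyEq he
  · subst h
    have h0 : ddPsi (1/2) = 0 := by unfold ddPsi; rw [if_neg (lt_irrefl _)]
    rw [h0]
    exact psi_flat_zero dPsi (fun y hy => by unfold dPsi; rw [if_neg (not_lt.2 hy)]) 4 3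
      (fun y hy => by unfold dPsi; rw [if_pos hy])
  · have hu : (2 * x - 1) ≠ 0 := by intro hc; rw [sub_eq_zero] at hc; linarith
    have hu2 : (2 * x - 1) ^ 2 ≠ 0 := pow_ne_zero _ hu
    have hu3 : (2 * x - 1) ^ 3 ≠ 0 := pow_ne_zero _ hu
    have h1 : HasDerivAt (fun y : ℝ => 2 * y - 1) 2 x := by
      simpa using ((hasDerivAt_id x).const_mul 2).sub_const 1
    have hexp := (((h1.fun_pow 2).fun_inv hu2).const_sub 1).exp
    have hc : HasDerivAt (fun y : ℝ => 4 / (2 * y - 1) ^ 3) (-(↑3 * (2*x-1)^2 * 2) / ((2*x-1)^3)^2 * 4) x := by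
      have := ((h1.fun_pow 3).fun_inv hu3).const_mul 4
      refine this.congr_deriv (Eq.symm ?_)
      ring
    have hmul := hc.mul hexp
    have he : dPsi =ᶠ[𝓝 x]
        fun y => 4 / (2 * y - 1) ^ 3 * Real.exp (1 - ((2 * y - 1) ^ 2)⁻¹) := by
      filter_upwards [Ioi_mem_nhds h] with y (hy : 1/2 < y)
      unfold dPsi; rw [if_pos hy, one_div]
    have h6 := hmul.congr_of_eventuallyEq he
    refine h6.congr_deriv (Eq.symm ?_)
    unfold ddPsi; rw [if_pos h, one_div]
    field_simp
    ring

lemma hasDerivAt_lam (x : ℝ) : HasDerivAt Lam (dLam x) x := by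
  have h1 : HasDerivAt (fun y : ℝ => -y ^ 2 / 2) (-x) x := by
    have := ((hasDerivAt_pow 2 x).neg).div_const 2
    refine this.congr_deriv (Eq.symm ?_)
    push_cast; ring
  have h2 := (h1.exp.sub_const 1).const_mul 8
  refine h2.congr_deriv (Eq.symm ?_)
  unfold dLam; ring

lemma hasDerivAt_dLam (x : ℝ) : HasDerivAt dLam (ddLam x) x := by
  have h1 : HasDerivAt (fun y : ℝ => -y ^ 2 / 2) (-x) x := by
    have := ((hasDerivAt_pow 2 x).neg).div_const 2
    refine this.congr_deriv (Eq.symm ?_)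
    push_cast; ring
  have h2 := (((hasDerivAt_id x).const_mul (-8)).mul h1.exp)
  refine h2.congr_deriv (Eq.symm ?_)
  unfold ddLam; simp only [id_eq]; ring

lemma lam_nonpos (x : ℝ) : Lam x ≤ 0 := by
  unfold Lam
  have : Real.exp (-x ^ 2 / 2) ≤ 1 := by
    rw [show (1:ℝ) = Real.exp 0 by simp, Real.exp_le_exp]
    nlinarith [sq_nonneg x]
  nlinarith

lemma psi_nonneg (x : ℝ) : 0 ≤ Psi x := by
  unfold Psi
  split
  · exact (Real.exp_pos _).le
  · exact le_refl 0

lemma ddPsi_nonneg {x : ℝ} (hx : x ≤ 9/10) : 0 ≤ ddPsi x := by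
  unfold ddPsi
  split
  · rename_i h
    have hu : (0:ℝ) < 2 * x - 1 := by linarith
    have hu8 : 2 * x - 1 ≤ 4/5 := by linarith
    have hu2 : (2*x-1)^2 ≤ 16/25 := by nlinarith
    have h1 : 0 ≤ 16 / (2*x-1)^6 - 24 / (2*x-1)^4 := by
      rw [sub_nonneg, div_le_div_iff₀ (by positivity) (by positivity)]
      have he6 : (2*x-1)^6 = (2*x-1)^4 * (2*x-1)^2 := by ring
      nlinarith [pow_pos hu 4]
    positivity
  · exact le_refl 0

lemma psi_mono {a b : ℝ} (ha : 1/2 < a) (hab : a ≤ b) : Psi a ≤ Psi b := by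
  unfold Psi
  rw [if_pos ha, if_pos (lt_of_lt_of_le ha hab)]
  rw [Real.exp_le_exp]
  have h1 : (0:ℝ) < 2 * a - 1 := by linarith
  have h2 : (0:ℝ) < 2 * b - 1 := by linarith
  have : 1 / (2*b-1)^2 ≤ 1 / (2*a-1)^2 := by
    apply one_div_le_one_div_of_le (by positivity)
    nlinarith
  linarith

lemma ddLam_le {x : ℝ} (hx : |x| ≤ 9/10) : ddLam x ≤ -(38/25) * Real.exp (-(81/200)) := by
  unfold ddLam
  have hx2 : x^2 ≤ 81/100 := by
    have := abs_le.1 hx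
    nlinarith [this.1, this.2]
  have he : Real.exp (-(81/200):ℝ) ≤ Real.exp (-x^2/2) := by
    rw [Real.exp_le_exp]
    linarith
  have hneg : x^2 - 1 ≤ -(19/100) := by linarith
  nlinarith [Real.exp_pos (-x^2/2), Real.exp_pos (-(81/200):ℝ), he]

def iprev {T : ℕ} (i : Fin T) : Fin T :=
  ⟨(i : ℕ) - 1, Nat.lt_of_le_of_lt (Nat.sub_le _ _) i.isLt⟩

noncomputable def gradG (T : ℕ) (y : EuclideanSpace ℝ (Fin T)) : EuclideanSpace ℝ (Fin T) :=
  ∑ i : Fin T,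
    if (i : ℕ) = 0 then (Psi 1 * dLam (y i)) • EuclideanSpace.single i (1:ℝ)
    else
      (dPsi (-(y (iprev i))) * Lam (-(y i)) * (-1) + dPsi (y (iprev i)) * Lam (y i)) •
          EuclideanSpace.single (iprev i) (1:ℝ) +
        (Psi (-(y (iprev i))) * dLam (-(y i)) * (-1) + Psi (y (iprev i)) * dLam (y i)) •
          EuclideanSpace.single i (1:ℝ)

noncomputable def LL (T : ℕ) (y : EuclideanSpace ℝ (Fin T)) (i : Fin T) :
    EuclideanSpace ℝ (Fin T) →L[ℝ] ℝ :=
  if (i : ℕ) = 0 then (Psi 1 * dLam (y i)) • (EuclideanSpace.proj i : _ →L[ℝ] ℝ)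
  else
    (dPsi (-(y (iprev i))) * Lam (-(y i)) * (-1) + dPsi (y (iprev i)) * Lam (y i)) •
        (EuclideanSpace.proj (iprev i) : _ →L[ℝ] ℝ) +
      (Psi (-(y (iprev i))) * dLam (-(y i)) * (-1) + Psi (y (iprev i)) * dLam (y i)) •
        (EuclideanSpace.proj i : _ →L[ℝ] ℝ)

lemma toDual_gradG (T : ℕ) (y : EuclideanSpace ℝ (Fin T)) :
    InnerProductSpace.toDual ℝ (EuclideanSpace ℝ (Fin T)) (gradG T y) = ∑ i, LL T y i := by
  apply ContinuousLinearMap.ext; intro v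
  rw [InnerProductSpace.toDual_apply_apply]
  unfold gradG LL
  rw [sum_inner, ContinuousLinearMap.sum_apply]
  refine Finset.sum_congr rfl fun i _ => ?_
  by_cases h : (i : ℕ) = 0 <;>
    simp [h, inner_add_left, real_inner_smul_left, EuclideanSpace.inner_single_left]

lemma hasFDerivAt_term (T : ℕ) (y : EuclideanSpace ℝ (Fin T)) (i : Fin T) :
    HasFDerivAt (fun z : EuclideanSpace ℝ (Fin T) =>
      if (i : ℕ) = 0 then Psi 1 * Lam (z i)
      else Psi (-(z (iprev i))) * Lam (-(z i)) + Psi (z (iprev i)) * Lam (z i))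
      (LL T y i) y := by
  have hproj : ∀ j : Fin T, HasFDerivAt (fun z : EuclideanSpace ℝ (Fin T) => z j)
      (EuclideanSpace.proj j : _ →L[ℝ] ℝ) y := fun j =>
    (EuclideanSpace.proj (𝕜 := ℝ) j).hasFDerivAt (x := y)
  by_cases h : (i : ℕ) = 0
  · simp only [h, if_true, LL, if_pos]
    have h1 : HasFDerivAt (fun z : EuclideanSpace ℝ (Fin T) => Lam (z i))
        (dLam (y i) • (EuclideanSpace.proj i : _ →L[ℝ] ℝ)) y :=
      (hasDerivAt_lam (y i)).comp_hasFDerivAt (f := fun z : EuclideanSpace ℝ (Fin T) => z i) y (hproj i)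
    have h2 := h1.const_mul (Psi 1)
    refine h2.congr_fderiv (Eq.symm ?_)
    ext v
    simp [mul_assoc]
  · simp only [h, if_false, LL]
    have hjn : HasFDerivAt (fun z : EuclideanSpace ℝ (Fin T) => -(z (iprev i)))
        (-(EuclideanSpace.proj (iprev i) : _ →L[ℝ] ℝ)) y :=
      (hproj (iprev i)).neg
    have hin : HasFDerivAt (fun z : EuclideanSpace ℝ (Fin T) => -(z i))
        (-(EuclideanSpace.proj i : _ →L[ℝ] ℝ)) y :=
      (hproj i).neg
    have h1 : HasFDerivAt (fun z : EuclideanSpace ℝ (Fin T) => Psi (-(z (iprev i))))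
        (dPsi (-(y (iprev i))) • -(EuclideanSpace.proj (iprev i) : _ →L[ℝ] ℝ)) y :=
      (hasDerivAt_psi _).comp_hasFDerivAt y hjn
    have h2 : HasFDerivAt (fun z : EuclideanSpace ℝ (Fin T) => Lam (-(z i)))
        (dLam (-(y i)) • -(EuclideanSpace.proj i : _ →L[ℝ] ℝ)) y :=
      (hasDerivAt_lam _).comp_hasFDerivAt y hin
    have h3 : HasFDerivAt (fun z : EuclideanSpace ℝ (Fin T) => Psi (z (iprev i)))
        (dPsi (y (iprev i)) • (EuclideanSpace.proj (iprev i) : _ →L[ℝ] ℝ)) y :=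
      (hasDerivAt_psi _).comp_hasFDerivAt y (hproj (iprev i))
    have h4 : HasFDerivAt (fun z : EuclideanSpace ℝ (Fin T) => Lam (z i))
        (dLam (y i) • (EuclideanSpace.proj i : _ →L[ℝ] ℝ)) y :=
      (hasDerivAt_lam _).comp_hasFDerivAt y (hproj i)
    have h5 := (h1.mul h2).add (h3.mul h4)
    refine h5.congr_fderiv (Eq.symm ?_)
    ext v
    simp
    ring

lemma hasGradientAt_G (T : ℕ) (y : EuclideanSpace ℝ (Fin T)) :
    HasGradientAt (G T) (gradG T y) y := by
  rw [hasGradientAt_iff_hasFDerivAt, toDual_gradG]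
  exact HasFDerivAt.fun_sum fun i _ => hasFDerivAt_term T y i

lemma gradient_G_eq (T : ℕ) : gradient (G T) = gradG T :=
  funext fun y => (hasGradientAt_G T y).gradient

lemma proj_apply' {T : ℕ} (j : Fin T) (v : EuclideanSpace ℝ (Fin T)) :
    (EuclideanSpace.proj (𝕜 := ℝ) j) v = v j := rfl

lemma lambdaMin_le {T : ℕ} (A : EuclideanSpace ℝ (Fin T) →L[ℝ] EuclideanSpace ℝ (Fin T))
    (e : EuclideanSpace ℝ (Fin T)) (he : ‖e‖ = 1) : lambdaMin A ≤ ⟪e, A e⟫ := by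
  have hb : BddBelow (Set.range fun u : {v : EuclideanSpace ℝ (Fin T) // ‖v‖ = 1} =>
      ⟪u.1, A u.1⟫) := by
    refine ⟨-‖A‖, ?_⟩
    rintro r ⟨u, rfl⟩
    have h1 : |⟪u.1, A u.1⟫| ≤ ‖u.1‖ * ‖A u.1‖ := abs_real_inner_le_norm _ _
    have h2 : ‖A u.1‖ ≤ ‖A‖ * ‖u.1‖ := A.le_opNorm _
    have h3 := u.2
    rw [h3, one_mul] at h1
    rw [h3, mul_one] at h2
    have h4 := neg_abs_le ⟪u.1, A u.1⟫
    linarith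
  exact ciInf_le hb ⟨e, he⟩

lemma psi_one : Psi 1 = 1 := by unfold Psi; rw [if_pos (by norm_num)]; norm_num

lemma key_num : 1/2 ≤ Psi (9/10) * ((38:ℝ)/25 * Real.exp (-(81/200))) := by
  have h1 : Psi (9/10) = Real.exp (-(9/16)) := by
    unfold Psi; rw [if_pos (by norm_num)]; norm_num
  have h2 : Real.exp (-(9/16)) * Real.exp (-(81/200)) = Real.exp (-(387/400)) := by
    rw [← Real.exp_add]; norm_num
  have h3 : Real.exp ((387:ℝ)/400) ≤ 76/25 := by
    have := Real.exp_one_lt_d9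
    have h4 : Real.exp ((387:ℝ)/400) ≤ Real.exp 1 := Real.exp_le_exp.2 (by norm_num)
    linarith
  have h5 : Real.exp (-(387/400):ℝ) * Real.exp ((387:ℝ)/400) = 1 := by
    rw [← Real.exp_add]; norm_num
  have h6 := Real.exp_pos (-(387/400):ℝ)
  have h8 : Psi (9/10) * ((38:ℝ)/25 * Real.exp (-(81/200))) =
      38/25 * Real.exp (-(387/400)) := by
    rw [h1, ← h2]; ring
  rw [h8]
  nlinarith [mul_le_mul_of_nonneg_left h3 h6.le]

lemma ddLam_even (t : ℝ) : ddLam (-t) = ddLam t := by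
  unfold ddLam
  rw [show (-t)^2 = t^2 by ring]

lemma final_bound (S d t2 : ℝ) (hS : Psi (9/10) ≤ S)
    (hd : d ≤ -(38/25) * Real.exp (-(81/200))) (ht2 : t2 ≤ 0) : S * d + t2 ≤ -(1/2) := by
  have hE := Real.exp_pos (-(81/200):ℝ)
  have hd0 : d ≤ 0 := le_trans hd (by nlinarith)
  have h1 : S * d ≤ Psi (9/10) * d := mul_le_mul_of_nonpos_right hS hd0
  have h2 : Psi (9/10) * d ≤ Psi (9/10) * (-(38/25) * Real.exp (-(81/200))) :=
    mul_le_mul_of_nonneg_left hd (psi_nonneg _)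
  have h3 := key_num
  nlinarith

set_option maxHeartbeats 1000000 in
/-- If `prog_{9/10}(x) < T - 1`, then the Hessian of `G_T` at `x` has an
eigenvalue at most `-1/2`. -/
theorem stmt_13 (T : ℕ) (hT : 2 ≤ T) (x : EuclideanSpace ℝ (Fin T))
    (hx : prog (9 / 10) x < T - 1) :
    lambdaMin (fderiv ℝ (gradient (G T)) x) ≤ -(1 / 2) := by
  classical
  have hx' : prog (9/10) x + 1 < T := by omega
  set p := prog (9/10) x with hpdef
  set pp : Fin T := ⟨p, by omega⟩ with hppdef
  set pq : Fin T := ⟨p+1, by omega⟩ with hpqdef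
  have hppv : (pp : ℕ) = p := rfl
  have hpqv : (pq : ℕ) = p + 1 := rfl
  -- facts from prog
  have hBdd : BddAbove {i : ℕ | i = 0 ∨ ∃ j : Fin T, (j : ℕ) + 1 = i ∧ 9/10 < |x j|} := by
    refine ⟨T, ?_⟩
    rintro i (rfl | ⟨j, hj, -⟩)
    · exact Nat.zero_le T
    · have := j.isLt; omega
  have hps : p = sSup {i : ℕ | i = 0 ∨ ∃ j : Fin T, (j : ℕ) + 1 = i ∧ 9/10 < |x j|} := by
    rw [hpdef]; norm_num [prog]
  have hmem : p ∈ {i : ℕ | i = 0 ∨ ∃ j : Fin T, (j : ℕ) + 1 = i ∧ 9/10 < |x j|} := by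
    rw [hps]; exact Nat.sSup_mem ⟨0, Or.inl rfl⟩ hBdd
  have hsmall : ∀ j : Fin T, p ≤ (j : ℕ) → |x j| ≤ 9/10 := by
    intro j hj
    by_contra hcon
    push_neg at hcon
    have hm : (j : ℕ) + 1 ∈ {i : ℕ | i = 0 ∨ ∃ j : Fin T, (j : ℕ) + 1 = i ∧ 9/10 < |x j|} :=
      Or.inr ⟨j, rfl, hcon⟩
    have := le_csSup hBdd hm
    rw [← hps] at this
    omega
  have hxp : |x pp| ≤ 9/10 := hsmall pp le_rfl
  have hxq : |x pq| ≤ 9/10 := hsmall pq (Nat.le_succ p)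
  have hxp1 : x pp ≤ 9/10 := (abs_le.1 hxp).2
  have hxp2 : -(x pp) ≤ 9/10 := by have := (abs_le.1 hxp).1; linarith
  -- the unit direction
  set e : EuclideanSpace ℝ (Fin T) := EuclideanSpace.single pp 1 with hedef
  have he : ‖e‖ = 1 := by rw [hedef, EuclideanSpace.norm_single]; norm_num
  rw [gradient_G_eq]
  refine le_trans (lambdaMin_le _ e he) ?_
  have hinner : ⟪e, (fderiv ℝ (gradG T) x) e⟫ = (fderiv ℝ (gradG T) x) e pp := by
    rw [hedef, EuclideanSpace.inner_single_left]; simp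
  rw [hinner]
  -- differentiability of the gradient
  have hproj : ∀ j : Fin T, HasFDerivAt (fun z : EuclideanSpace ℝ (Fin T) => z j)
      (EuclideanSpace.proj j : _ →L[ℝ] ℝ) x := fun j =>
    (EuclideanSpace.proj (𝕜 := ℝ) j).hasFDerivAt (x := x)
  have hD : ∀ (g : ℝ → ℝ) (dg : ℝ → ℝ), (∀ t, HasDerivAt g (dg t) t) → ∀ j : Fin T,
      DifferentiableAt ℝ (fun y : EuclideanSpace ℝ (Fin T) => g (y j)) x ∧
      DifferentiableAt ℝ (fun y : EuclideanSpace ℝ (Fin T) => g (-(y j))) x := by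
    intro g dg hg j
    exact ⟨((hg _).comp_hasFDerivAt x (hproj j)).differentiableAt,
           ((hg _).comp_hasFDerivAt x (hproj j).neg).differentiableAt⟩
  have hdiff : DifferentiableAt ℝ (gradG T) x := by
    have hterm : ∀ i : Fin T, DifferentiableAt ℝ (fun y : EuclideanSpace ℝ (Fin T) =>
        if (i : ℕ) = 0 then (Psi 1 * dLam (y i)) • EuclideanSpace.single i (1:ℝ)
        else
          (dPsi (-(y (iprev i))) * Lam (-(y i)) * (-1) + dPsi (y (iprev i)) * Lam (y i)) •
              EuclideanSpace.single (iprev i) (1:ℝ) +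
            (Psi (-(y (iprev i))) * dLam (-(y i)) * (-1) + Psi (y (iprev i)) * dLam (y i)) •
              EuclideanSpace.single i (1:ℝ)) x := by
      intro i
      by_cases h : (i : ℕ) = 0
      · simp only [h, if_true, eq_self_iff_true, ite_true]
        exact ((hD dLam ddLam hasDerivAt_dLam i).1.const_mul (Psi 1)).smul_const (EuclideanSpace.single i (1:ℝ))
      · simp only [h, if_false, ite_false]
        refine DifferentiableAt.add (DifferentiableAt.smul_const ?_ _)
          (DifferentiableAt.smul_const ?_ _)
        · exact (((hD dPsi ddPsi hasDerivAt_dPsi (iprev i)).2.mul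
            (hD Lam dLam hasDerivAt_lam i).2).mul_const (-1)).add
            ((hD dPsi ddPsi hasDerivAt_dPsi (iprev i)).1.mul (hD Lam dLam hasDerivAt_lam i).1)
        · exact (((hD Psi dPsi hasDerivAt_psi (iprev i)).2.mul
            (hD dLam ddLam hasDerivAt_dLam i).2).mul_const (-1)).add
            ((hD Psi dPsi hasDerivAt_psi (iprev i)).1.mul (hD dLam ddLam hasDerivAt_dLam i).1)
    have hg : gradG T = fun y => ∑ i : Fin T,
        (if (i : ℕ) = 0 then (Psi 1 * dLam (y i)) • EuclideanSpace.single i (1:ℝ)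
        else
          (dPsi (-(y (iprev i))) * Lam (-(y i)) * (-1) + dPsi (y (iprev i)) * Lam (y i)) •
              EuclideanSpace.single (iprev i) (1:ℝ) +
            (Psi (-(y (iprev i))) * dLam (-(y i)) * (-1) + Psi (y (iprev i)) * dLam (y i)) •
              EuclideanSpace.single i (1:ℝ)) := rfl
    rw [hg]
    exact DifferentiableAt.fun_sum (fun i _ => hterm i)
  have hppq : pp ≠ pq := Fin.ne_of_val_ne (by omega)
  have hpqp : pq ≠ pp := hppq.symm
  have hiprevpq : iprev pq = pp := Fin.ext (by show p + 1 - 1 = p; omega)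
  have hek : ∀ k : Fin T, e k = if k = pp then 1 else 0 := by
    intro k; rw [hedef, EuclideanSpace.single_apply]
  have hfb := final_bound
  by_cases hp0 : p = 0
  · -- p = 0 : previous coordinate is the convention x₀ = 1
    have hcoord : (fun y : EuclideanSpace ℝ (Fin T) => gradG T y pp) =
        (fun y : EuclideanSpace ℝ (Fin T) =>
          Psi 1 * dLam (y pp) +
          (dPsi (-(y pp)) * Lam (-(y pq)) * (-1) + dPsi (y pp) * Lam (y pq))) := by
      funext y
      show (gradG T y) pp = _
      unfold gradG
      rw [WithLp.ofLp_sum, Finset.sum_apply]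
      rw [← Finset.sum_subset (Finset.subset_univ ({pp, pq} : Finset (Fin T)))]
      · rw [Finset.sum_insert (by simp [hppq]), Finset.sum_singleton]
        simp only [apply_ite (fun v : EuclideanSpace ℝ (Fin T) => v pp), PiLp.add_apply,
          PiLp.smul_apply, EuclideanSpace.single_apply, smul_eq_mul, hiprevpq, hppv, hpqv, hp0]
        simp [hppq, hpqp]
      · intro i _ hi
        simp only [Finset.mem_insert, Finset.mem_singleton] at hi
        push_neg at hi
        have hi1 : pp ≠ i := fun hh => hi.1 hh.symm
        by_cases h0 : (i : ℕ) = 0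
        · simp [h0, apply_ite (fun v : EuclideanSpace ℝ (Fin T) => v pp),
            PiLp.smul_apply, EuclideanSpace.single_apply, hi1]
        · have hi3 : pp ≠ iprev i := by
            intro hh
            apply hi.2
            apply Fin.ext
            have h4 : p = (i : ℕ) - 1 := congrArg Fin.val hh
            show (i : ℕ) = p + 1
            omega
          simp [h0, apply_ite (fun v : EuclideanSpace ℝ (Fin T) => v pp),
            PiLp.add_apply, PiLp.smul_apply, EuclideanSpace.single_apply, hi1, hi3]
    have h4 : HasFDerivAt (fun y : EuclideanSpace ℝ (Fin T) => dLam (y pp))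
        (ddLam (x pp) • (EuclideanSpace.proj pp : _ →L[ℝ] ℝ)) x :=
      (hasDerivAt_dLam _).comp_hasFDerivAt x (hproj pp)
    have h5 : HasFDerivAt (fun y : EuclideanSpace ℝ (Fin T) => dPsi (-(y pp)))
        (ddPsi (-(x pp)) • -(EuclideanSpace.proj pp : _ →L[ℝ] ℝ)) x :=
      (hasDerivAt_dPsi _).comp_hasFDerivAt x (hproj pp).neg
    have h6 : HasFDerivAt (fun y : EuclideanSpace ℝ (Fin T) => Lam (-(y pq)))
        (dLam (-(x pq)) • -(EuclideanSpace.proj pq : _ →L[ℝ] ℝ)) x :=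
      (hasDerivAt_lam _).comp_hasFDerivAt x (hproj pq).neg
    have h7 : HasFDerivAt (fun y : EuclideanSpace ℝ (Fin T) => dPsi (y pp))
        (ddPsi (x pp) • (EuclideanSpace.proj pp : _ →L[ℝ] ℝ)) x :=
      (hasDerivAt_dPsi _).comp_hasFDerivAt x (hproj pp)
    have h8 : HasFDerivAt (fun y : EuclideanSpace ℝ (Fin T) => Lam (y pq))
        (dLam (x pq) • (EuclideanSpace.proj pq : _ →L[ℝ] ℝ)) x :=
      (hasDerivAt_lam _).comp_hasFDerivAt x (hproj pq)
    have hPhi := (h4.const_mul (Psi 1)).add (((h5.mul h6).mul_const (-1)).add (h7.mul h8))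
    have hcomp : HasFDerivAt (fun y => gradG T y pp)
        ((EuclideanSpace.proj (𝕜 := ℝ) pp).comp (fderiv ℝ (gradG T) x)) x :=
      ((EuclideanSpace.proj (𝕜 := ℝ) pp).hasFDerivAt).comp x hdiff.hasFDerivAt
    rw [hcoord] at hcomp
    have hL := hcomp.unique hPhi
    have hval : (fderiv ℝ (gradG T) x) e pp =
        ((EuclideanSpace.proj (𝕜 := ℝ) pp).comp (fderiv ℝ (gradG T) x)) e := rfl
    rw [hval, hL]
    simp only [ContinuousLinearMap.add_apply, ContinuousLinearMap.coe_smul', Pi.smul_apply,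
      ContinuousLinearMap.neg_apply, proj_apply', smul_eq_mul, hek, if_pos rfl]
    simp only [hpqp, if_false, ite_false]
    have hS : Psi (9/10) ≤ Psi 1 := psi_mono (by norm_num) (by norm_num)
    have hd : ddLam (x pp) ≤ -(38/25) * Real.exp (-(81/200)) := ddLam_le hxp
    have ht3 : ddPsi (-(x pp)) * Lam (-(x pq)) ≤ 0 :=
      mul_nonpos_iff.2 (Or.inl ⟨ddPsi_nonneg hxp2, lam_nonpos _⟩)
    have ht4 : ddPsi (x pp) * Lam (x pq) ≤ 0 :=
      mul_nonpos_iff.2 (Or.inl ⟨ddPsi_nonneg hxp1, lam_nonpos _⟩)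
    have hfb2 := final_bound (Psi 1) (ddLam (x pp))
      (ddPsi (-(x pp)) * Lam (-(x pq)) + ddPsi (x pp) * Lam (x pq)) hS hd (by linarith)
    norm_num
    nlinarith [hfb2]
  · -- p ≠ 0 : previous coordinate satisfies |x jj| > 9/10
    set jj : Fin T := iprev pp with hjjdef
    have hjjv : (jj : ℕ) = p - 1 := rfl
    have hjjpp : jj ≠ pp := Fin.ne_of_val_ne (by rw [hjjv, hppv]; omega)
    have hppjj : pp ≠ jj := hjjpp.symm
    have ha : 9/10 < |x jj| := by
      rcases hmem with h0 | ⟨j', hj', hgt⟩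
      · exact absurd h0 hp0
      · have hj : j' = jj := Fin.ext (by rw [hjjv]; omega)
        rwa [hj] at hgt
    have hcoord : (fun y : EuclideanSpace ℝ (Fin T) => gradG T y pp) =
        (fun y : EuclideanSpace ℝ (Fin T) =>
          (Psi (-(y jj)) * dLam (-(y pp)) * (-1) + Psi (y jj) * dLam (y pp)) +
          (dPsi (-(y pp)) * Lam (-(y pq)) * (-1) + dPsi (y pp) * Lam (y pq))) := by
      funext y
      show (gradG T y) pp = _
      unfold gradG
      rw [WithLp.ofLp_sum, Finset.sum_apply]
      rw [← Finset.sum_subset (Finset.subset_univ ({pp, pq} : Finset (Fin T)))]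
      · rw [Finset.sum_insert (by simp [hppq]), Finset.sum_singleton]
        simp only [apply_ite (fun v : EuclideanSpace ℝ (Fin T) => v pp), PiLp.add_apply,
          PiLp.smul_apply, EuclideanSpace.single_apply, smul_eq_mul, hiprevpq, hppv, hpqv]
        rw [← hjjdef]
        simp [hp0, hppjj, hppq, hpqp]
      · intro i _ hi
        simp only [Finset.mem_insert, Finset.mem_singleton] at hi
        push_neg at hi
        have hi1 : pp ≠ i := fun hh => hi.1 hh.symm
        by_cases h0 : (i : ℕ) = 0
        · simp [h0, apply_ite (fun v : EuclideanSpace ℝ (Fin T) => v pp),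
            PiLp.smul_apply, EuclideanSpace.single_apply, hi1]
        · have hi3 : pp ≠ iprev i := by
            intro hh
            apply hi.2
            apply Fin.ext
            have h4 : p = (i : ℕ) - 1 := congrArg Fin.val hh
            show (i : ℕ) = p + 1
            omega
          simp [h0, apply_ite (fun v : EuclideanSpace ℝ (Fin T) => v pp),
            PiLp.add_apply, PiLp.smul_apply, EuclideanSpace.single_apply, hi1, hi3]
    have h1 : HasFDerivAt (fun y : EuclideanSpace ℝ (Fin T) => Psi (-(y jj)))
        (dPsi (-(x jj)) • -(EuclideanSpace.proj jj : _ →L[ℝ] ℝ)) x :=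
      (hasDerivAt_psi _).comp_hasFDerivAt x (hproj jj).neg
    have h2 : HasFDerivAt (fun y : EuclideanSpace ℝ (Fin T) => dLam (-(y pp)))
        (ddLam (-(x pp)) • -(EuclideanSpace.proj pp : _ →L[ℝ] ℝ)) x :=
      (hasDerivAt_dLam _).comp_hasFDerivAt x (hproj pp).neg
    have h3 : HasFDerivAt (fun y : EuclideanSpace ℝ (Fin T) => Psi (y jj))
        (dPsi (x jj) • (EuclideanSpace.proj jj : _ →L[ℝ] ℝ)) x :=
      (hasDerivAt_psi _).comp_hasFDerivAt x (hproj jj)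
    have h4 : HasFDerivAt (fun y : EuclideanSpace ℝ (Fin T) => dLam (y pp))
        (ddLam (x pp) • (EuclideanSpace.proj pp : _ →L[ℝ] ℝ)) x :=
      (hasDerivAt_dLam _).comp_hasFDerivAt x (hproj pp)
    have h5 : HasFDerivAt (fun y : EuclideanSpace ℝ (Fin T) => dPsi (-(y pp)))
        (ddPsi (-(x pp)) • -(EuclideanSpace.proj pp : _ →L[ℝ] ℝ)) x :=
      (hasDerivAt_dPsi _).comp_hasFDerivAt x (hproj pp).neg
    have h6 : HasFDerivAt (fun y : EuclideanSpace ℝ (Fin T) => Lam (-(y pq)))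
        (dLam (-(x pq)) • -(EuclideanSpace.proj pq : _ →L[ℝ] ℝ)) x :=
      (hasDerivAt_lam _).comp_hasFDerivAt x (hproj pq).neg
    have h7 : HasFDerivAt (fun y : EuclideanSpace ℝ (Fin T) => dPsi (y pp))
        (ddPsi (x pp) • (EuclideanSpace.proj pp : _ →L[ℝ] ℝ)) x :=
      (hasDerivAt_dPsi _).comp_hasFDerivAt x (hproj pp)
    have h8 : HasFDerivAt (fun y : EuclideanSpace ℝ (Fin T) => Lam (y pq))
        (dLam (x pq) • (EuclideanSpace.proj pq : _ →L[ℝ] ℝ)) x :=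
      (hasDerivAt_lam _).comp_hasFDerivAt x (hproj pq)
    have hPhi := (((h1.mul h2).mul_const (-1)).add (h3.mul h4)).add
      (((h5.mul h6).mul_const (-1)).add (h7.mul h8))
    have hcomp : HasFDerivAt (fun y => gradG T y pp)
        ((EuclideanSpace.proj (𝕜 := ℝ) pp).comp (fderiv ℝ (gradG T) x)) x :=
      ((EuclideanSpace.proj (𝕜 := ℝ) pp).hasFDerivAt).comp x hdiff.hasFDerivAt
    rw [hcoord] at hcomp
    have hL := hcomp.unique hPhi
    have hval : (fderiv ℝ (gradG T) x) e pp =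
        ((EuclideanSpace.proj (𝕜 := ℝ) pp).comp (fderiv ℝ (gradG T) x)) e := rfl
    rw [hval, hL]
    simp only [ContinuousLinearMap.add_apply, ContinuousLinearMap.coe_smul', Pi.smul_apply,
      ContinuousLinearMap.neg_apply, proj_apply', smul_eq_mul, hek, if_pos rfl]
    simp only [hpqp, hjjpp, if_false, ite_false]
    have hS : Psi (9/10) ≤ Psi (-(x jj)) + Psi (x jj) := by
      rcases lt_abs.1 ha with h | h
      · have h1' := psi_mono (by norm_num : (1:ℝ)/2 < 9/10) h.le
        have h2' := psi_nonneg (-(x jj))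
        linarith
      · have h1' := psi_mono (by norm_num : (1:ℝ)/2 < 9/10) h.le
        have h2' := psi_nonneg (x jj)
        linarith
    have hd : ddLam (x pp) ≤ -(38/25) * Real.exp (-(81/200)) := ddLam_le hxp
    have ht3 : ddPsi (-(x pp)) * Lam (-(x pq)) ≤ 0 :=
      mul_nonpos_iff.2 (Or.inl ⟨ddPsi_nonneg hxp2, lam_nonpos _⟩)
    have ht4 : ddPsi (x pp) * Lam (x pq) ≤ 0 :=
      mul_nonpos_iff.2 (Or.inl ⟨ddPsi_nonneg hxp1, lam_nonpos _⟩)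
    have hfb2 := final_bound (Psi (-(x jj)) + Psi (x jj)) (ddLam (x pp))
      (ddPsi (-(x pp)) * Lam (-(x pq)) + ddPsi (x pp) * Lam (x pq)) hS hd (by linarith)
    norm_num
    rw [ddLam_even]
    nlinarith [hfb2]
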